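/- If a group Γ is written as a finite union Γ = Y₁ ∪ ... ∪ Yᵣ of subsets, then there exists an index ℓ such that the subgroup generated by the elements γδ⁻¹, for γ, δ ∈ Yₗ, has index at most r in Γ. -/
import Mathlib

open scoped Pointwise

/-- If a group `Γ` is a finite union of subsets `Y₁ ∪ ... ∪ Yᵣ`, then for some index `ℓ`
the subgroup generated by the elements `γδ⁻¹`, `γ, δ ∈ Y_ℓ`, has index at most `r`. -/
theorem exists_difference_subgroup_small_index {Γ : Type*} [Group Γ] (r : ℕ)
    (Y : Fin r → Set Γ) (hcover : (⋃ i, Y i) = Set.univ) :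
    ∃ ℓ : Fin r,
      (Subgroup.closure {x : Γ | ∃ γ ∈ Y ℓ, ∃ δ ∈ Y ℓ, x = γ * δ⁻¹}).index ≠ 0 ∧
      (Subgroup.closure {x : Γ | ∃ γ ∈ Y ℓ, ∃ δ ∈ Y ℓ, x = γ * δ⁻¹}).index ≤ r := by
  classical
  set H : Fin r → Subgroup Γ :=
    fun i => Subgroup.closure {x : Γ | ∃ γ ∈ Y i, ∃ δ ∈ Y i, x = γ * δ⁻¹} with hH
  set s : Finset (Fin r) := Finset.univ.filter (fun i => (Y i).Nonempty) with hs
  have hd : ∀ i ∈ s, (Y i).Nonempty := by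
    intro i hi; simpa [hs] using (Finset.mem_filter.mp hi).2
  -- choose a base point in each nonempty Y i
  set d : Fin r → Γ := fun i => if h : (Y i).Nonempty then h.choose else 1 with hdd
  have hdY : ∀ i ∈ s, d i ∈ Y i := by
    intro i hi
    have h := hd i hi
    simp only [hdd, dif_pos h]
    exact h.choose_spec
  -- conjugated subgroups
  set K : Fin r → Subgroup Γ :=
    fun i => (H i).comap ((MulAut.conj (d i)).toMonoidHom) with hK
  have hKindex : ∀ i, (K i).index = (H i).index := fun i =>
    Subgroup.index_comap_of_surjective _ (MulAut.conj (d i)).surjective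
  have hcovers : ⋃ i ∈ s, (d i) • (K i : Set Γ) = Set.univ := by
    apply Set.eq_univ_of_forall
    intro x
    obtain ⟨i, hi⟩ : ∃ i, x ∈ Y i := by
      have := hcover ▸ Set.mem_univ x
      simpa using this
    have his : i ∈ s := by simp [hs]; exact ⟨x, hi⟩
    refine Set.mem_biUnion his ?_
    refine ⟨(d i)⁻¹ * x, ?_, by simp [smul_eq_mul]⟩
    show (MulAut.conj (d i)) ((d i)⁻¹ * x) ∈ H i
    have : (MulAut.conj (d i)) ((d i)⁻¹ * x) = x * (d i)⁻¹ := by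
      simp [MulAut.conj_apply, mul_assoc]
    rw [this]
    exact Subgroup.subset_closure ⟨x, hi, d i, hdY i his, rfl⟩
  obtain ⟨i, hi, hfin, hle⟩ := Subgroup.exists_index_le_card_of_leftCoset_cover hcovers
  refine ⟨i, ?_, ?_⟩
  · rw [← hKindex i]; exact hfin.index_ne_zero
  · calc (H i).index = (K i).index := (hKindex i).symm
      _ ≤ s.card := hle
      _ ≤ r := le_trans (Finset.card_filter_le _ _) (by simp)
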